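/- Volume independence of the conditional expectation on even observables: let X ⊆ Λ₁ ⊆ Λ₂ ⊆ Γ with Λ₂ finite, and let A ∈ 𝔄_{Λ₁}⁺. Then 𝔼_X^{Λ₁}(A) = 𝔼_X^{Λ₂}(A). -/

import Mathlib

set_option linter.unusedSectionVars false


open scoped Classical

/-- The canonical anticommutation relations for a family `a x` of annihilation
operators in a C*-algebra. -/
def IsCAR {Γ A : Type*} [Ring A] [StarRing A] (a : Γ → A) : Prop :=
  (∀ x y, a x * a y + a y * a x = 0) ∧
  (∀ x y, star (a x) * star (a y) + star (a y) * star (a x) = 0) ∧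
  (∀ x y, a x * star (a y) + star (a y) * a x = if x = y then (1 : A) else 0)

/-- The four possible factors of a monomial at a site `x`:
`1`, `a x`, `a x *`, and `a x * a x`. -/
def carFactor {Γ A : Type*} [Ring A] [StarRing A] (a : Γ → A) (k : Fin 4) (x : Γ) : A :=
  match k with
  | 0 => 1
  | 1 => a x
  | 2 => star (a x)
  | 3 => star (a x) * a x

/-- The monomial with factor pattern `k` along the enumeration `l` of a finite set of sites. -/
def carMonomial {Γ A : Type*} [Ring A] [StarRing A] (a : Γ → A) (l : List Γ)
    (k : Γ → Fin 4) : A :=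
  (l.map fun x => carFactor a (k x) x).prod

/-- The number of odd factors (`a x` or `a x *`) of the monomial with pattern `k` along `l`. -/
def carOddCount {Γ : Type*} (l : List Γ) (k : Γ → Fin 4) : ℕ :=
  l.countP fun x => decide (k x = 1 ∨ k x = 2)

/-- `𝔄_X`: the linear span of the monomials supported in the finite set `X`. -/
def carSpan {Γ A : Type*} [Ring A] [StarRing A] [Algebra ℂ A] (a : Γ → A) (X : Finset Γ) :
    Submodule ℂ A :=
  Submodule.span ℂ {m | ∃ (l : List Γ) (k : Γ → Fin 4),
    l.Nodup ∧ l.toFinset = X ∧ m = carMonomial a l k}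

/-- `𝔄_X⁺`: the linear span of the even monomials supported in the finite set `X`. -/
def carSpanEven {Γ A : Type*} [Ring A] [StarRing A] [Algebra ℂ A] (a : Γ → A) (X : Finset Γ) :
    Submodule ℂ A :=
  Submodule.span ℂ {m | ∃ (l : List Γ) (k : Γ → Fin 4),
    l.Nodup ∧ l.toFinset = X ∧ Even (carOddCount l k) ∧ m = carMonomial a l k}

/-- The single-site unitaries `u_x^(0) = 1`, `u_x^(1) = a_x* + a_x`, `u_x^(2) = a_x* − a_x`,
`u_x^(3) = 1 − 2 a_x* a_x`. -/
def uFactor {Γ A : Type*} [Ring A] [StarRing A] (a : Γ → A) (k : Fin 4) (x : Γ) : A :=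
  match k with
  | 0 => 1
  | 1 => star (a x) + a x
  | 2 => star (a x) - a x
  | 3 => 1 - 2 * (star (a x) * a x)

/-- The unitary `u(α) = u_{x_1}^{(α(x_1))} ⋯ u_{x_n}^{(α(x_n))}` along the enumeration `l`
of `Λ ∖ X`. -/
def uProd {Γ A : Type*} [Ring A] [StarRing A] (a : Γ → A) (l : List Γ)
    (α : Fin l.length → Fin 4) : A :=
  (List.ofFn fun i => uFactor a (α i) (l.get i)).prod

/-- The conditional expectation `𝔼_X^Λ(B) = 4^{−|Λ∖X|} ∑_{α} u(α)* B u(α)`, where `l` is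
an enumeration of `Λ ∖ X`. -/
noncomputable def condExp {Γ A : Type*} [Ring A] [StarRing A] [Algebra ℂ A] (a : Γ → A)
    (l : List Γ) (B : A) : A :=
  ((4 : ℂ) ^ l.length)⁻¹ • ∑ α : Fin l.length → Fin 4, star (uProd a l α) * B * uProd a l α

section Basic
variable {Γ A : Type*} [Ring A] [StarRing A] [Algebra ℂ A] {a : Γ → A}

lemma add_self_zero {x : A} (h : x + x = 0) : x = 0 := by
  have h2 : (2:ℂ) • x = 0 := by rw [two_smul]; exact h
  calc x = (2:ℂ)⁻¹ • ((2:ℂ) • x) := by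
        rw [smul_smul, inv_mul_cancel₀ (by norm_num), one_smul]
    _ = 0 := by rw [h2, smul_zero]

lemma IsCAR.aa (h : IsCAR a) (x : Γ) : a x * a x = 0 := add_self_zero (h.1 x x)
lemma IsCAR.ss (h : IsCAR a) (x : Γ) : star (a x) * star (a x) = 0 := add_self_zero (h.2.1 x x)
lemma IsCAR.as (h : IsCAR a) (x : Γ) : a x * star (a x) + star (a x) * a x = 1 := by
  simpa using h.2.2 x x

/-- `d` picks up sign `ε` when moved across `c`. -/
def AltE (d : A) (ε : ℤ) (c : A) : Prop := d * c = ε • (c * d)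

lemma altE_one {d : A} : AltE d 1 (1:A) := by simp [AltE]
lemma altE_mul {d c c' : A} {ε ε' : ℤ} (h : AltE d ε c) (h' : AltE d ε' c') :
    AltE d (ε * ε') (c * c') := by
  unfold AltE at *
  calc d * (c * c') = (ε • (c * d)) * c' := by rw [← mul_assoc, h]
    _ = ε • (c * (d * c')) := by rw [smul_mul_assoc, mul_assoc]
    _ = ε • (c * (ε' • (c' * d))) := by rw [h']
    _ = (ε * ε') • (c * c' * d) := by rw [mul_smul_comm, smul_smul, mul_assoc]
lemma altE_add {d c c' : A} {ε : ℤ} (h : AltE d ε c) (h' : AltE d ε c') :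
    AltE d ε (c + c') := by
  unfold AltE at *; rw [mul_add, add_mul, smul_add, h, h']
lemma altE_neg {d c : A} {ε : ℤ} (h : AltE d ε c) : AltE d ε (-c) := by
  unfold AltE at *; rw [mul_neg, h, neg_mul, smul_neg]
lemma altE_sub {d c c' : A} {ε : ℤ} (h : AltE d ε c) (h' : AltE d ε c') :
    AltE d ε (c - c') := by
  rw [sub_eq_add_neg]; exact altE_add h (altE_neg h')
lemma altE_csmul {d c : A} {ε : ℤ} (r : ℂ) (h : AltE d ε c) : AltE d ε (r • c) := by
  unfold AltE at *; rw [mul_smul_comm, h, smul_comm, smul_mul_assoc]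

def AltComm (a : Γ → A) (y : Γ) (ε : ℤ) (c : A) : Prop :=
  AltE (a y) ε c ∧ AltE (star (a y)) ε c

lemma altComm_one {y : Γ} : AltComm a y 1 (1:A) := ⟨altE_one, altE_one⟩
lemma altComm_mul {y : Γ} {ε ε' : ℤ} {c c' : A} (h : AltComm a y ε c)
    (h' : AltComm a y ε' c') : AltComm a y (ε * ε') (c * c') :=
  ⟨altE_mul h.1 h'.1, altE_mul h.2 h'.2⟩
lemma altComm_add {y : Γ} {ε : ℤ} {c c' : A} (h : AltComm a y ε c)
    (h' : AltComm a y ε c') : AltComm a y ε (c + c') :=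
  ⟨altE_add h.1 h'.1, altE_add h.2 h'.2⟩
lemma altComm_sub {y : Γ} {ε : ℤ} {c c' : A} (h : AltComm a y ε c)
    (h' : AltComm a y ε c') : AltComm a y ε (c - c') :=
  ⟨altE_sub h.1 h'.1, altE_sub h.2 h'.2⟩
lemma altComm_csmul {y : Γ} {ε : ℤ} {c : A} (r : ℂ) (h : AltComm a y ε c) :
    AltComm a y ε (r • c) := ⟨altE_csmul r h.1, altE_csmul r h.2⟩

lemma altComm_a (h : IsCAR a) {x y : Γ} (hxy : x ≠ y) : AltComm a y (-1) (a x) := by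
  constructor
  · have := h.1 x y
    unfold AltE; rw [neg_one_zsmul]; exact eq_neg_of_add_eq_zero_right this
  · have := h.2.2 x y
    rw [if_neg hxy] at this
    unfold AltE; rw [neg_one_zsmul]; exact eq_neg_of_add_eq_zero_right this

lemma altComm_star_a (h : IsCAR a) {x y : Γ} (hxy : x ≠ y) :
    AltComm a y (-1) (star (a x)) := by
  constructor
  · have := h.2.2 y x
    rw [if_neg (Ne.symm hxy)] at this
    unfold AltE; rw [neg_one_zsmul]; exact eq_neg_of_add_eq_zero_left this
  · have := h.2.1 x y
    unfold AltE; rw [neg_one_zsmul]; exact eq_neg_of_add_eq_zero_right this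

end Basic

section Car
variable {Γ A : Type*} [DecidableEq Γ] [Ring A] [StarRing A] [Algebra ℂ A] {a : Γ → A}

/-- sign of a factor index: `-1` for the odd factors `1,2`, `+1` for `0,3`. -/
def fSign (k : Fin 4) : ℤ := if k = 1 ∨ k = 2 then -1 else 1

lemma fSign_sq (k : Fin 4) : fSign k * fSign k = 1 := by
  unfold fSign; split <;> norm_num

lemma altComm_carFactor (h : IsCAR a) {x y : Γ} (hxy : x ≠ y) (k : Fin 4) :
    AltComm a y (fSign k) (carFactor a k x) := by
  fin_cases k
  · exact altComm_one
  · exact altComm_a h hxy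
  · exact altComm_star_a h hxy
  · have := altComm_mul (altComm_star_a h hxy) (altComm_a h hxy)
    norm_num at this
    exact this

lemma carMonomial_cons (x : Γ) (l : List Γ) (k : Γ → Fin 4) :
    carMonomial a (x :: l) k = carFactor a (k x) x * carMonomial a l k := by
  simp [carMonomial]

lemma carOddCount_cons (x : Γ) (l : List Γ) (k : Γ → Fin 4) :
    carOddCount (x :: l) k
      = carOddCount l k + if (k x = 1 ∨ k x = 2) then 1 else 0 := by
  simp [carOddCount, List.countP_cons]

lemma altComm_carMonomial (h : IsCAR a) {y : Γ} {l : List Γ} (hy : y ∉ l) (k : Γ → Fin 4) :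
    AltComm a y ((-1) ^ (carOddCount l k)) (carMonomial a l k) := by
  induction l with
  | nil => simpa [carMonomial, carOddCount] using (altComm_one (a := a) (y := y))
  | cons x t ih =>
    have hxy : x ≠ y := fun hh => hy (hh ▸ (List.mem_cons_self : x ∈ x :: t))
    have hyt : y ∉ t := fun hh => hy (List.mem_cons_of_mem _ hh)
    have h1 := altComm_mul (altComm_carFactor h hxy (k x)) (ih hyt)
    rw [carMonomial_cons, carOddCount_cons]
    convert h1 using 2
    unfold fSign
    split
    · rw [pow_succ]; ring
    · ring
end Car


section U2
variable {Γ A : Type*} [DecidableEq Γ] [Ring A] [StarRing A] [Algebra ℂ A] {a : Γ → A}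

lemma altComm_uFactor (h : IsCAR a) {x y : Γ} (hxy : x ≠ y) (k : Fin 4) :
    AltComm a y (fSign k) (uFactor a k x) := by
  fin_cases k
  · exact altComm_one
  · exact altComm_add (altComm_star_a h hxy) (altComm_a h hxy)
  · exact altComm_sub (altComm_star_a h hxy) (altComm_a h hxy)
  · have hm : AltComm a y 1 (star (a x) * a x) := by
      have := altComm_mul (altComm_star_a h hxy) (altComm_a h hxy)
      norm_num at this; exact this
    have h2 : AltComm a y 1 ((2:A) * (star (a x) * a x)) := by
      rw [two_mul]; exact altComm_add hm hm
    exact altComm_sub altComm_one h2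

lemma uFactor_mul_altComm (h : IsCAR a) {y : Γ} {ε : ℤ} {c : A} (hc : AltComm a y ε c)
    (hε : ε * ε = 1) (k : Fin 4) :
    uFactor a k y * c = (if k = 1 ∨ k = 2 then ε else 1) • (c * uFactor a k y) := by
  obtain ⟨hc1, hc2⟩ := hc
  unfold AltE at hc1 hc2
  fin_cases k
  · simp [uFactor]
  · show (star (a y) + a y) * c = ε • (c * (star (a y) + a y))
    rw [add_mul, hc1, hc2, mul_add, smul_add]
  · show (star (a y) - a y) * c = ε • (c * (star (a y) - a y))
    rw [sub_mul, hc1, hc2, mul_sub, smul_sub]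
  · show (1 - 2*(star (a y) * a y)) * c = (1:ℤ) • (c * (1 - 2*(star (a y) * a y)))
    have hm : (star (a y) * a y) * c = c * (star (a y) * a y) := by
      calc (star (a y) * a y) * c = star (a y) * (a y * c) := by rw [mul_assoc]
        _ = star (a y) * (ε • (c * a y)) := by rw [hc1]
        _ = ε • ((star (a y) * c) * a y) := by rw [mul_smul_comm, mul_assoc]
        _ = ε • ((ε • (c * star (a y))) * a y) := by rw [hc2]
        _ = (ε*ε) • (c * (star (a y) * a y)) := by rw [smul_mul_assoc, smul_smul, mul_assoc]
        _ = c * (star (a y) * a y) := by rw [hε, one_smul]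
    have h2 : (2*(star (a y) * a y)) * c = c * (2*(star (a y) * a y)) := by
      rw [two_mul, add_mul, mul_add, hm]
    rw [one_zsmul, sub_mul, mul_sub, one_mul, mul_one, h2]

lemma star_uFactor_mul_self (h : IsCAR a) (k : Fin 4) (x : Γ) :
    star (uFactor a k x) * uFactor a k x = 1 := by
  have haa := h.aa x
  have hss := h.ss x
  have has := h.as x
  have haas : a x * star (a x) = 1 - star (a x) * a x := eq_sub_of_add_eq has
  fin_cases k
  · simp [uFactor]
  · show star (star (a x) + a x) * (star (a x) + a x) = 1
    rw [star_add, star_star]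
    calc (a x + star (a x)) * (star (a x) + a x)
        = (a x * star (a x) + star (a x) * a x) + (a x * a x + star (a x) * star (a x)) := by
          noncomm_ring
      _ = 1 := by rw [has, haa, hss]; simp
  · show star (star (a x) - a x) * (star (a x) - a x) = 1
    rw [star_sub, star_star]
    calc (a x - star (a x)) * (star (a x) - a x)
        = (a x * star (a x) + star (a x) * a x) - (a x * a x + star (a x) * star (a x)) := by
          noncomm_ring
      _ = 1 := by rw [has, haa, hss]; simp
  · show star (1 - 2*(star (a x) * a x)) * (1 - 2*(star (a x) * a x)) = 1
    have hstar : star ((1:A) - 2*(star (a x) * a x)) = 1 - 2*(star (a x) * a x) := by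
      rw [star_sub, star_one, star_mul, star_mul, star_star, star_ofNat]
      noncomm_ring
    rw [hstar]
    calc ((1:A) - 2*(star (a x) * a x)) * (1 - 2*(star (a x) * a x))
        = 1 - 4 * (star (a x) * a x) + 4 * (star (a x) * (a x * star (a x)) * a x) := by
          noncomm_ring
      _ = 1 - 4 * (star (a x) * a x)
            + 4 * ((star (a x) * a x) - (star (a x) * star (a x)) * (a x * a x)) := by
          rw [haas]; noncomm_ring
      _ = 1 := by rw [hss, zero_mul]; noncomm_ring

lemma uProd_cons (z : Γ) (l : List Γ) (α : Fin (l.length + 1) → Fin 4) :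
    uProd a (z::l) α = uFactor a (α 0) z * uProd a l (fun i => α i.succ) := by
  simp [uProd, List.ofFn_succ]

lemma star_mul_self_mul {f u : A} (hf : star f * f = 1) (hu : star u * u = 1) :
    star (f * u) * (f * u) = 1 := by
  rw [star_mul]
  calc (star u * star f) * (f * u) = star u * ((star f * f) * u) := by noncomm_ring
    _ = 1 := by rw [hf, one_mul, hu]

lemma star_uProd_mul_self (h : IsCAR a) (l : List Γ) :
    ∀ α : Fin l.length → Fin 4, star (uProd a l α) * uProd a l α = 1 := by
  induction l with
  | nil => intro α; simp [uProd]
  | cons z t ih =>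
    intro α
    rw [uProd_cons z t α]
    exact star_mul_self_mul (star_uFactor_mul_self h _ _) (ih _)
end U2


section CE
variable {Γ A : Type*} [DecidableEq Γ] [Ring A] [StarRing A] [Algebra ℂ A] {a : Γ → A}

lemma condExp_cons (a : Γ → A) (z : Γ) (l : List Γ) (B : A) :
    condExp a (z::l) B = (4:ℂ)⁻¹ • ∑ k : Fin 4,
      condExp a l (star (uFactor a k z) * B * uFactor a k z) := by
  have key : ∀ (k : Fin 4) (β : Fin l.length → Fin 4),
      star (uProd a (z::l) (Fin.cons k β)) * B * uProd a (z::l) (Fin.cons k β)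
        = star (uProd a l β) * (star (uFactor a k z) * B * uFactor a k z) * uProd a l β := by
    intro k β
    have hu : uProd a (z::l) (Fin.cons k β) = uFactor a k z * uProd a l β := by
      rw [uProd_cons z l (Fin.cons k β)]
      simp
    rw [hu, star_mul]
    noncomm_ring
  unfold condExp
  simp only [List.length_cons]
  rw [← Equiv.sum_comp (Fin.consEquiv (fun _ : Fin (l.length + 1) => Fin 4))
      (fun α => star (uProd a (z::l) α) * B * uProd a (z::l) α)]
  rw [Fintype.sum_prod_type]
  simp only [Fin.consEquiv, Equiv.coe_fn_mk]
  have hbody : ∀ k : Fin 4, (∑ β : Fin l.length → Fin 4,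
      star (uProd a (z::l) (Fin.cons k β)) * B * uProd a (z::l) (Fin.cons k β))
      = ∑ β : Fin l.length → Fin 4,
        star (uProd a l β) * (star (uFactor a k z) * B * uFactor a k z) * uProd a l β :=
    fun k => Finset.sum_congr rfl fun β _ => key k β
  calc ((4:ℂ) ^ (l.length + 1))⁻¹ • ∑ k : Fin 4, ∑ β : Fin l.length → Fin 4,
        (fun α => star (uProd a (z::l) α) * B * uProd a (z::l) α) (Fin.cons k β)
      = ((4:ℂ) ^ (l.length + 1))⁻¹ • ∑ k : Fin 4, ∑ β : Fin l.length → Fin 4,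
        star (uProd a l β) * (star (uFactor a k z) * B * uFactor a k z) * uProd a l β := by
        congr 1
        exact Finset.sum_congr rfl fun k _ => hbody k
    _ = (4:ℂ)⁻¹ • ∑ k : Fin 4,
        condExp a l (star (uFactor a k z) * B * uFactor a k z) := by
        unfold condExp
        rw [← Finset.smul_sum, smul_smul]
        congr 1
        rw [pow_succ, mul_inv]
        ring

lemma uFactor_comm_of (h : IsCAR a) {y : Γ} {B : A}
    (h1 : a y * B = B * a y) (h2 : star (a y) * B = B * star (a y)) (k : Fin 4) :
    uFactor a k y * B = B * uFactor a k y := by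
  have hac : AltComm a y 1 B :=
    ⟨by unfold AltE; rw [one_zsmul]; exact h1, by unfold AltE; rw [one_zsmul]; exact h2⟩
  have := uFactor_mul_altComm h hac (by norm_num) k
  simpa using this

lemma condExp_cons_of_comm (h : IsCAR a) {y : Γ} {B : A} (l : List Γ)
    (h1 : a y * B = B * a y) (h2 : star (a y) * B = B * star (a y)) :
    condExp a (y::l) B = condExp a l B := by
  rw [condExp_cons]
  have hk : ∀ k : Fin 4, star (uFactor a k y) * B * uFactor a k y = B := by
    intro k
    rw [mul_assoc, ← uFactor_comm_of h h1 h2 k, ← mul_assoc, star_uFactor_mul_self h, one_mul]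
  simp only [hk]
  rw [Finset.sum_const, Finset.card_univ, Fintype.card_fin,
    ← Nat.cast_smul_eq_nsmul ℂ, smul_smul]
  norm_num

lemma uFactor_swap (h : IsCAR a) {x y : Γ} (hxy : x ≠ y) (j k : Fin 4) :
    ∃ ε : ℤ, ε * ε = 1 ∧
      uFactor a k y * uFactor a j x = ε • (uFactor a j x * uFactor a k y) := by
  refine ⟨if k = 1 ∨ k = 2 then fSign j else 1, ?_, ?_⟩
  · split
    · exact fSign_sq j
    · norm_num
  · exact uFactor_mul_altComm h (altComm_uFactor h hxy j) (fSign_sq j) k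

lemma condExp_swap (h : IsCAR a) {x y : Γ} (hxy : x ≠ y) (t : List Γ) (B : A) :
    condExp a (y::x::t) B = condExp a (x::y::t) B := by
  have key : ∀ (j k : Fin 4),
      star (uFactor a j x) * (star (uFactor a k y) * B * uFactor a k y) * uFactor a j x
      = star (uFactor a k y) * (star (uFactor a j x) * B * uFactor a j x) * uFactor a k y := by
    intro j k
    obtain ⟨ε, hε2, hvu⟩ := uFactor_swap h hxy j k
    have hsvu : star (uFactor a j x) * star (uFactor a k y)
        = ε • (star (uFactor a k y) * star (uFactor a j x)) := by
      have := congrArg star hvu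
      rwa [star_mul, star_zsmul, star_mul] at this
    calc star (uFactor a j x) * (star (uFactor a k y) * B * uFactor a k y) * uFactor a j x
        = (star (uFactor a j x) * star (uFactor a k y)) * B
            * (uFactor a k y * uFactor a j x) := by noncomm_ring
      _ = (ε • (star (uFactor a k y) * star (uFactor a j x))) * B
            * (ε • (uFactor a j x * uFactor a k y)) := by rw [hsvu, hvu]
      _ = (ε * ε) • ((star (uFactor a k y) * star (uFactor a j x)) * B
            * (uFactor a j x * uFactor a k y)) := by
          rw [smul_mul_assoc, smul_mul_assoc, mul_smul_comm, smul_smul]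
      _ = star (uFactor a k y) * (star (uFactor a j x) * B * uFactor a j x)
            * uFactor a k y := by
          rw [hε2, one_smul]; noncomm_ring
  rw [condExp_cons, condExp_cons]
  congr 1
  rw [show (∑ k : Fin 4, condExp a (x::t) (star (uFactor a k y) * B * uFactor a k y))
      = ∑ k : Fin 4, (4:ℂ)⁻¹ • ∑ j : Fin 4, condExp a t
          (star (uFactor a j x) * (star (uFactor a k y) * B * uFactor a k y) * uFactor a j x)
    from Finset.sum_congr rfl fun k _ => condExp_cons a x t _]
  rw [show (∑ j : Fin 4, condExp a (y::t) (star (uFactor a j x) * B * uFactor a j x))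
      = ∑ j : Fin 4, (4:ℂ)⁻¹ • ∑ k : Fin 4, condExp a t
          (star (uFactor a k y) * (star (uFactor a j x) * B * uFactor a j x) * uFactor a k y)
    from Finset.sum_congr rfl fun j _ => condExp_cons a y t _]
  rw [← Finset.smul_sum, ← Finset.smul_sum]
  congr 1
  rw [Finset.sum_comm]
  exact Finset.sum_congr rfl fun j _ => Finset.sum_congr rfl fun k _ => by rw [key j k]

lemma condExp_perm (h : IsCAR a) {l l' : List Γ} (hp : l.Perm l') :
    l.Nodup → ∀ B, condExp a l B = condExp a l' B := by
  induction hp with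
  | nil => intro _ B; rfl
  | cons z _ ih =>
    intro hn B
    rw [condExp_cons, condExp_cons]
    congr 1
    exact Finset.sum_congr rfl fun k _ => ih (List.Nodup.of_cons hn) _
  | swap u v t =>
    intro hn B
    have huv : u ≠ v := by
      rw [List.nodup_cons] at hn
      exact fun hh => hn.1 (hh ▸ (List.mem_cons_self : u ∈ u :: t))
    exact condExp_swap h huv t B
  | trans h1 _ ih1 ih2 =>
    intro hn B
    rw [ih1 hn B, ih2 (h1.nodup hn) B]

lemma condExp_append (h : IsCAR a) {B : A} (m l : List Γ)
    (hc : ∀ y ∈ m, a y * B = B * a y ∧ star (a y) * B = B * star (a y)) :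
    condExp a (m ++ l) B = condExp a l B := by
  induction m with
  | nil => rfl
  | cons z t ih =>
    have hz := hc z ((List.mem_cons_self : z ∈ z :: t))
    rw [List.cons_append, condExp_cons_of_comm h _ hz.1 hz.2,
      ih (fun y hy => hc y (List.mem_cons_of_mem _ hy))]
end CE

/-- volume independence of the conditional expectation on even observables:
for `X ⊆ Λ₁ ⊆ Λ₂` and `A₀ ∈ 𝔄_{Λ₁}⁺`, `𝔼_X^{Λ₁}(A₀) = 𝔼_X^{Λ₂}(A₀)`. -/
theorem condExp_volume_independence
    {Γ A : Type*} [DecidableEq Γ]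
    [NormedRing A] [StarRing A] [CStarRing A] [NormedAlgebra ℂ A]
    (a : Γ → A) (hCAR : IsCAR a)
    (X Λ₁ Λ₂ : Finset Γ) (hXΛ₁ : X ⊆ Λ₁) (hΛ₁Λ₂ : Λ₁ ⊆ Λ₂)
    (l₁ : List Γ) (hl₁ : l₁.Nodup) (hl₁set : l₁.toFinset = Λ₁ \ X)
    (l₂ : List Γ) (hl₂ : l₂.Nodup) (hl₂set : l₂.toFinset = Λ₂ \ X)
    (A₀ : A) (hA : A₀ ∈ carSpanEven a Λ₁) :
    condExp a l₁ A₀ = condExp a l₂ A₀ := by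
  classical
  have hcomm : ∀ y, y ∉ Λ₁ → a y * A₀ = A₀ * a y ∧ star (a y) * A₀ = A₀ * star (a y) := by
    intro y hy
    have hac : AltComm a y 1 A₀ := by
      refine Submodule.span_induction ?_ ?_ ?_ ?_ hA
      · rintro c ⟨l, k, hnd, hset, heven, rfl⟩
        have hyl : y ∉ l := by
          intro hm
          apply hy
          rw [← hset]
          simpa using hm
        have h1 := altComm_carMonomial hCAR hyl k
        rwa [Even.neg_one_pow heven] at h1
      · exact ⟨by unfold AltE; simp, by unfold AltE; simp⟩
      · intro c d _ _ hc hd; exact altComm_add hc hd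
      · intro r c _ hc; exact altComm_csmul r hc
    obtain ⟨h1, h2⟩ := hac
    unfold AltE at h1 h2
    rw [one_zsmul] at h1 h2
    exact ⟨h1, h2⟩
  set le := (Λ₂ \ Λ₁).toList with hle_def
  have hle_nd : le.Nodup := Finset.nodup_toList _
  have hle_set : le.toFinset = Λ₂ \ Λ₁ := Finset.toList_toFinset _
  have hle_not : ∀ y ∈ le, y ∉ Λ₁ := by
    intro y hy
    exact (Finset.mem_sdiff.mp (hle_set ▸ List.mem_toFinset.mpr hy)).2
  have hdisj : le.Disjoint l₁ := by
    intro y hy hyl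
    have h2 : y ∈ Λ₁ \ X := hl₁set ▸ List.mem_toFinset.mpr hyl
    exact hle_not y hy (Finset.mem_sdiff.mp h2).1
  have hnd : (le ++ l₁).Nodup := List.Nodup.append hle_nd hl₁ hdisj
  have hset : (le ++ l₁).toFinset = Λ₂ \ X := by
    rw [List.toFinset_append, hle_set, hl₁set]
    ext z
    simp only [Finset.mem_union, Finset.mem_sdiff]
    constructor
    · rintro (⟨h1, h2⟩ | ⟨h1, h2⟩)
      · exact ⟨h1, fun hz => h2 (hXΛ₁ hz)⟩
      · exact ⟨hΛ₁Λ₂ h1, h2⟩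
    · rintro ⟨h1, h2⟩
      by_cases hz : z ∈ Λ₁
      · exact Or.inr ⟨hz, h2⟩
      · exact Or.inl ⟨h1, hz⟩
  have hperm : l₂.Perm (le ++ l₁) :=
    List.perm_of_nodup_nodup_toFinset_eq hl₂ hnd (hl₂set.trans hset.symm)
  rw [condExp_perm hCAR hperm hl₂ A₀,
    condExp_append hCAR le l₁ (fun y hy => hcomm y (hle_not y hy))]
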